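/- Fix K, M ∈ ℕ and d : Fin K → ℕ; for each k let F̄ₖ ∈ ℂ^{M×d_k}, Ḡₖ ∈ ℂ^{M×d_k}, and for each ordered pair (l,k) with l ≠ k let H̄_{lk} ∈ ℂ^{d_k×d_l}. Define IL(r) = Σ_{l≠k} ‖H̄_{lk} + F̄ₖᴴ diag(r) Ḡₗ‖_F² and Σ = Σ_{l≠k} (F̄ₖF̄ₖᴴ) ⊙ (ḠₗḠₗᴴ)*. Suppose r₀ ∈ ℂ^M satisfies IL(r₀) = 0. Then for any r ∈ ℂ^M, IL(r) = 0 if and only if star(u) ⬝ᵥ r = star(u) ⬝ᵥ r₀ for every u in the column space of Σ (i.e., every u of the form Σ.mulVec v). In particular, zero interference leakage depends only on the signal-subspace coordinates of r. -/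

import Mathlib

set_option maxHeartbeats 1000000


open Matrix

lemma sum4_rev {E : Type*} [AddCommMonoid E] {α β γ δ : Type*}
    [Fintype α] [Fintype β] [Fintype γ] [Fintype δ]
    (f : α → β → γ → δ → E) :
    ∑ i, ∑ j, ∑ k, ∑ l, f i j k l = ∑ l, ∑ k, ∑ j, ∑ i, f i j k l := by
  calc ∑ i, ∑ j, ∑ k, ∑ l, f i j k l
      = ∑ j, ∑ i, ∑ k, ∑ l, f i j k l := Finset.sum_comm
    _ = ∑ j, ∑ k, ∑ i, ∑ l, f i j k l :=
        Finset.sum_congr rfl fun _ _ => Finset.sum_comm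
    _ = ∑ k, ∑ j, ∑ i, ∑ l, f i j k l := Finset.sum_comm
    _ = ∑ k, ∑ j, ∑ l, ∑ i, f i j k l :=
        Finset.sum_congr rfl fun _ _ => Finset.sum_congr rfl fun _ _ => Finset.sum_comm
    _ = ∑ k, ∑ l, ∑ j, ∑ i, f i j k l :=
        Finset.sum_congr rfl fun _ _ => Finset.sum_comm
    _ = ∑ l, ∑ k, ∑ j, ∑ i, f i j k l := Finset.sum_comm

lemma sum3_rot {E : Type*} [AddCommMonoid E] {α β γ : Type*}
    [Fintype α] [Fintype β] [Fintype γ] (f : α → β → γ → E) :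
    ∑ m, ∑ i, ∑ j, f m i j = ∑ i, ∑ j, ∑ m, f m i j := by
  rw [Finset.sum_comm]
  exact Finset.sum_congr rfl fun _ _ => Finset.sum_comm

lemma entry_C {M da db : ℕ} (A : Matrix (Fin M) (Fin da) ℂ)
    (B : Matrix (Fin M) (Fin db) ℂ) (x : Fin M → ℂ)
    (i : Fin da) (j : Fin db) :
    (Aᴴ * Matrix.diagonal x * B) i j = ∑ m, starRingEnd ℂ (A m i) * x m * B m j := by
  simp [Matrix.mul_apply, Matrix.diagonal, Matrix.conjTranspose_apply, mul_assoc,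
    Finset.sum_ite_eq, ite_mul, mul_ite]

lemma quad {M da db : ℕ} (A : Matrix (Fin M) (Fin da) ℂ)
    (B : Matrix (Fin M) (Fin db) ℂ) (x : Fin M → ℂ) :
    star x ⬝ᵥ (Matrix.hadamard (A * Aᴴ) ((B * Bᴴ).map (starRingEnd ℂ))).mulVec x
      = ∑ i, ∑ j, ((Aᴴ * Matrix.diagonal x * B) i j
          * starRingEnd ℂ ((Aᴴ * Matrix.diagonal x * B) i j)) := by
  have hR : ∑ i, ∑ j, ((Aᴴ * Matrix.diagonal x * B) i j
          * starRingEnd ℂ ((Aᴴ * Matrix.diagonal x * B) i j))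
      = ∑ i : Fin da, ∑ j : Fin db, ∑ m : Fin M, ∑ n : Fin M,
          (starRingEnd ℂ (A m i) * x m * B m j) *
            (A n i * starRingEnd ℂ (x n) * starRingEnd ℂ (B n j)) := by
    simp only [entry_C, map_sum, _root_.map_mul, Complex.conj_conj, Finset.sum_mul,
      Finset.mul_sum]
    exact Finset.sum_congr rfl fun i _ => Finset.sum_congr rfl fun j _ => Finset.sum_comm
  rw [hR, sum4_rev]
  simp only [dotProduct, mulVec, Matrix.hadamard_apply, Matrix.map_apply,
    Matrix.mul_apply, Matrix.conjTranspose_apply, Pi.star_apply,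
    map_sum, Finset.mul_sum, Finset.sum_mul, Complex.conj_conj, RCLike.star_def,
    _root_.map_mul]
  refine Finset.sum_congr rfl fun n _ => Finset.sum_congr rfl fun m _ =>
    Finset.sum_congr rfl fun j _ => Finset.sum_congr rfl fun i _ => ?_
  ring

lemma hadamard_mulVec_zero {M da db : ℕ} (A : Matrix (Fin M) (Fin da) ℂ)
    (B : Matrix (Fin M) (Fin db) ℂ) (x : Fin M → ℂ) (h : Aᴴ * Matrix.diagonal x * B = 0) :
    (Matrix.hadamard (A * Aᴴ) ((B * Bᴴ).map (starRingEnd ℂ))).mulVec x = 0 := by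
  funext n
  have key : (Matrix.hadamard (A * Aᴴ) ((B * Bᴴ).map (starRingEnd ℂ))).mulVec x n
      = ∑ i, ∑ j, A n i * starRingEnd ℂ (B n j) * (Aᴴ * Matrix.diagonal x * B) i j := by
    have hRHS : ∑ i, ∑ j, A n i * starRingEnd ℂ (B n j) * (Aᴴ * Matrix.diagonal x * B) i j
        = ∑ i, ∑ j, ∑ m, A n i * starRingEnd ℂ (B n j)
            * (starRingEnd ℂ (A m i) * x m * B m j) := by
      simp only [entry_C, Finset.mul_sum]
    rw [hRHS, ← sum3_rot]
    simp only [mulVec, dotProduct, Matrix.hadamard_apply, Matrix.map_apply,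
      Matrix.mul_apply, Matrix.conjTranspose_apply, map_sum, _root_.map_mul,
      Complex.conj_conj, RCLike.star_def, Finset.mul_sum, Finset.sum_mul]
    refine Finset.sum_congr rfl fun m _ => ?_
    rw [Finset.sum_comm]
    refine Finset.sum_congr rfl fun i _ => Finset.sum_congr rfl fun j _ => ?_
    ring
  rw [key, h]
  simp

lemma frob_zero {a b : ℕ} (N : Matrix (Fin a) (Fin b) ℂ)
    (h : ∑ i, ∑ j, ‖N i j‖ ^ 2 = 0) : N = 0 := by
  ext i j
  have h1 := (Finset.sum_eq_zero_iff_of_nonneg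
    (fun i _ => Finset.sum_nonneg fun j _ => by positivity)).mp h i (Finset.mem_univ i)
  have h2 := (Finset.sum_eq_zero_iff_of_nonneg
    (fun j _ => by positivity)).mp h1 j (Finset.mem_univ j)
  simpa using h2

lemma ite_sum_zero {K : ℕ} (g : Fin K → Fin K → ℝ) (hg : ∀ l k, 0 ≤ g l k)
    (h : ∑ l, ∑ k, (if l ≠ k then g l k else 0) = 0) :
    ∀ l k, l ≠ k → g l k = 0 := by
  intro l k hlk
  have hnn : ∀ l k : Fin K, (0:ℝ) ≤ (if l ≠ k then g l k else 0) := by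
    intro l k
    by_cases hc : l ≠ k
    · simpa [hc] using hg l k
    · simp [hc]
  have h1 := (Finset.sum_eq_zero_iff_of_nonneg
    (fun l _ => Finset.sum_nonneg fun k _ => hnn l k)).mp h l (Finset.mem_univ l)
  have h2 := (Finset.sum_eq_zero_iff_of_nonneg
    (fun k _ => hnn l k)).mp h1 k (Finset.mem_univ k)
  simpa [hlk] using h2

lemma sum_ite_mulVec {K M : ℕ} (S : Fin K → Fin K → Matrix (Fin M) (Fin M) ℂ)
    (x : Fin M → ℂ) :
    (∑ l, ∑ k, if l ≠ k then S l k else 0).mulVec x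
      = ∑ l, ∑ k, if l ≠ k then (S l k).mulVec x else 0 := by
  funext n
  simp only [mulVec, dotProduct, Matrix.sum_apply, Finset.sum_apply,
    Finset.sum_mul, Pi.zero_apply]
  rw [sum3_rot]
  refine Finset.sum_congr rfl fun l _ => Finset.sum_congr rfl fun k _ => ?_
  by_cases hc : l ≠ k <;> simp [hc, mulVec, dotProduct]

lemma dot_sum_ite {K M : ℕ} (v : Fin M → ℂ) (w : Fin K → Fin K → (Fin M → ℂ)) :
    v ⬝ᵥ (∑ l, ∑ k, if l ≠ k then w l k else 0)
      = ∑ l, ∑ k, if l ≠ k then v ⬝ᵥ w l k else 0 := by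
  simp only [dotProduct, Finset.sum_apply, Pi.zero_apply, Finset.mul_sum]
  rw [sum3_rot]
  refine Finset.sum_congr rfl fun l _ => Finset.sum_congr rfl fun k _ => ?_
  by_cases hc : l ≠ k <;> simp [hc, Finset.mul_sum]

lemma mul_conj_eq_norm_sq (z : ℂ) : z * starRingEnd ℂ z = ((‖z‖ ^ 2 : ℝ) : ℂ) := by
  simp [Complex.mul_conj, Complex.normSq_eq_norm_sq]

lemma star_dot_self_zero {M : ℕ} {v : Fin M → ℂ} (h : star v ⬝ᵥ v = 0) : v = 0 := by
  funext n
  have h2 : ((∑ m, Complex.normSq (v m) : ℝ) : ℂ) = 0 := by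
    rw [← h]
    push_cast
    simp [dotProduct, Complex.mul_conj, mul_comm]
  have h3 := Complex.ofReal_eq_zero.mp h2
  have h4 := (Finset.sum_eq_zero_iff_of_nonneg
    (fun m _ => Complex.normSq_nonneg (v m))).mp h3 n (Finset.mem_univ n)
  simpa using Complex.normSq_eq_zero.mp h4

/-- If `IL r₀ = 0`, then `IL r = 0` iff `r` has the same signal-subspace
coordinates as `r₀`: `uᴴ r = uᴴ r₀` for every `u` in the column space of `Σ`. -/
theorem zero_IL_iff_signal_coords (K M : ℕ) (d : Fin K → ℕ)
    (F : (k : Fin K) → Matrix (Fin M) (Fin (d k)) ℂ)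
    (G : (k : Fin K) → Matrix (Fin M) (Fin (d k)) ℂ)
    (H : (l k : Fin K) → Matrix (Fin (d k)) (Fin (d l)) ℂ)
    (IL : (Fin M → ℂ) → ℝ)
    (hIL : ∀ r, IL r = ∑ l, ∑ k, if l ≠ k then
      ∑ i, ∑ j, ‖(H l k + (F k)ᴴ * Matrix.diagonal r * G l) i j‖ ^ 2 else 0)
    (Sig : Matrix (Fin M) (Fin M) ℂ)
    (hSig : Sig = ∑ l, ∑ k, if l ≠ k then
      Matrix.hadamard (F k * (F k)ᴴ) ((G l * (G l)ᴴ).map (starRingEnd ℂ)) else 0)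
    (r₀ : Fin M → ℂ) (hr₀ : IL r₀ = 0) :
    ∀ r : Fin M → ℂ,
      IL r = 0 ↔ ∀ v : Fin M → ℂ,
        star (Sig.mulVec v) ⬝ᵥ r = star (Sig.mulVec v) ⬝ᵥ r₀ := by
  intro r
  set x : Fin M → ℂ := r - r₀ with hx
  -- Step A : H l k = -(F k)ᴴ diag r₀ G l  for l ≠ k
  have hA : ∀ l k : Fin K, l ≠ k → H l k + (F k)ᴴ * Matrix.diagonal r₀ * G l = 0 := by
    intro l k hlk
    have h0 : ∑ l, ∑ k, (if l ≠ k then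
        ∑ i, ∑ j, ‖(H l k + (F k)ᴴ * Matrix.diagonal r₀ * G l) i j‖ ^ 2 else 0) = 0 := by
      rw [← hIL r₀]; exact hr₀
    have := ite_sum_zero _ (fun l k => Finset.sum_nonneg fun i _ =>
      Finset.sum_nonneg fun j _ => by positivity) h0 l k hlk
    exact frob_zero _ this
  -- Step B : residual matrices in terms of x
  have hB : ∀ l k : Fin K, l ≠ k →
      H l k + (F k)ᴴ * Matrix.diagonal r * G l
        = (F k)ᴴ * Matrix.diagonal x * G l := by
    intro l k hlk
    have hdiag : (Matrix.diagonal r : Matrix (Fin M) (Fin M) ℂ)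
        = Matrix.diagonal x + Matrix.diagonal r₀ := by
      ext i j
      rcases eq_or_ne i j with rfl | hij
      · simp [Matrix.diagonal_apply_eq, hx]
      · simp [Matrix.diagonal_apply_ne _ hij]
    calc H l k + (F k)ᴴ * Matrix.diagonal r * G l
        = (H l k + (F k)ᴴ * Matrix.diagonal r₀ * G l)
            + (F k)ᴴ * Matrix.diagonal x * G l := by
          rw [hdiag, Matrix.mul_add, Matrix.add_mul]; abel
      _ = (F k)ᴴ * Matrix.diagonal x * G l := by rw [hA l k hlk, zero_add]
  -- IL r rewritten through x
  have hILx : IL r = ∑ l, ∑ k, if l ≠ k then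
      ∑ i, ∑ j, ‖((F k)ᴴ * Matrix.diagonal x * G l) i j‖ ^ 2 else 0 := by
    rw [hIL r]
    refine Finset.sum_congr rfl fun l _ => Finset.sum_congr rfl fun k _ => ?_
    by_cases hc : l ≠ k
    · rw [if_pos hc, if_pos hc, hB l k hc]
    · rw [if_neg hc, if_neg hc]
  -- decomposition of Sig.mulVec x
  have hdecomp : Sig.mulVec x = ∑ l, ∑ k, if l ≠ k then
      (Matrix.hadamard (F k * (F k)ᴴ)
        ((G l * (G l)ᴴ).map (starRingEnd ℂ))).mulVec x else 0 := by
    rw [hSig, sum_ite_mulVec]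
  -- Step C : (IL r : ℂ) = xᴴ Sig x
  have hC : ((IL r : ℝ) : ℂ) = star x ⬝ᵥ Sig.mulVec x := by
    rw [hdecomp, dot_sum_ite, hILx]
    push_cast [apply_ite ((↑) : ℝ → ℂ)]
    refine Finset.sum_congr rfl fun l _ => Finset.sum_congr rfl fun k _ => ?_
    by_cases hc : l ≠ k
    · rw [if_pos hc, if_pos hc, quad]
      exact Finset.sum_congr rfl fun i _ => Finset.sum_congr rfl fun j _ => by
        rw [mul_conj_eq_norm_sq]; push_cast; ring
    · rw [if_neg hc, if_neg hc]
  -- Sig is Hermitian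
  have hherm : Sigᴴ = Sig := by
    rw [hSig]
    simp only [Matrix.conjTranspose_sum]
    refine Finset.sum_congr rfl fun l _ => Finset.sum_congr rfl fun k _ => ?_
    rw [apply_ite (fun X : Matrix (Fin M) (Fin M) ℂ => Xᴴ)]
    congr 1
    · ext n m
      have hF := (Matrix.isHermitian_mul_conjTranspose_self (F k)).apply n m
      have hG := (Matrix.isHermitian_mul_conjTranspose_self (G l)).apply n m
      simp only [Matrix.conjTranspose_apply, Matrix.hadamard_apply, Matrix.map_apply,
        _root_.map_mul, Complex.conj_conj]
      rw [← hF, ← hG]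
      simp [mul_comm]
    · simp
  have hswap : ∀ v w : Fin M → ℂ,
      star (Sig.mulVec v) ⬝ᵥ w = star v ⬝ᵥ Sig.mulVec w := by
    intro v w
    rw [Matrix.star_mulVec, hherm, ← Matrix.dotProduct_mulVec]
  -- Step D : IL r = 0 → Sig x = 0
  have hD : IL r = 0 → Sig.mulVec x = 0 := by
    intro h
    rw [hILx] at h
    have hC0 : ∀ l k : Fin K, l ≠ k → (F k)ᴴ * Matrix.diagonal x * G l = 0 := by
      intro l k hlk
      exact frob_zero _ (ite_sum_zero _ (fun l k => Finset.sum_nonneg fun i _ =>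
        Finset.sum_nonneg fun j _ => by positivity) h l k hlk)
    rw [hdecomp]
    refine Finset.sum_eq_zero fun l _ => Finset.sum_eq_zero fun k _ => ?_
    by_cases hc : l ≠ k
    · rw [if_pos hc]
      exact hadamard_mulVec_zero _ _ _ (hC0 l k hc)
    · rw [if_neg hc]
  constructor
  · intro h v
    have hSx := hD h
    have h1 : star (Sig.mulVec v) ⬝ᵥ x = 0 := by
      rw [hswap, hSx]
      simp
    have h2 : star (Sig.mulVec v) ⬝ᵥ x
        = star (Sig.mulVec v) ⬝ᵥ r - star (Sig.mulVec v) ⬝ᵥ r₀ := by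
      rw [hx, dotProduct_sub]
    rw [h2] at h1
    exact sub_eq_zero.mp h1
  · intro hv
    have hSx : Sig.mulVec x = 0 := by
      have hall : ∀ v : Fin M → ℂ, star v ⬝ᵥ Sig.mulVec x = 0 := by
        intro v
        rw [← hswap]
        have h2 : star (Sig.mulVec v) ⬝ᵥ x
            = star (Sig.mulVec v) ⬝ᵥ r - star (Sig.mulVec v) ⬝ᵥ r₀ := by
          rw [hx, dotProduct_sub]
        rw [h2, hv v, sub_self]
      exact star_dot_self_zero (hall (Sig.mulVec x))
    have : ((IL r : ℝ) : ℂ) = 0 := by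
      rw [hC, hSx]
      simp
    exact_mod_cast this
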